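/- Let S : ℝ^p → ℝ be differentiable at β, R : ℝ^p → ℝ convex, d ∈ ℝ^p a direction, H positive semidefinite, 0 ≤ κ < 1, and define Δ = (∇S(β))ᵀd + κ dᵀHd + R(β + d) - R(β). If Δ < 0, then for every 0 < ζ < 1 there exists ᾱ > 0 such that for all α ∈ (0, ᾱ], Q(β + αd) ≤ Q(β) + α ζ Δ; in particular the Armijo rule backtracking terminates in finitely many steps. -/

import Mathlib

open Matrix

/-- Armijo backtracking terminates: if
`Δ = (∇S(β))ᵀd + κ dᵀHd + R(β+d) - R(β) < 0`, then for every `ζ ∈ (0,1)` there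
is `ᾱ > 0` such that `Q(β + αd) ≤ Q(β) + αζΔ` for all `α ∈ (0, ᾱ]`. -/
theorem armijo_terminates {p : ℕ} (S R : (Fin p → ℝ) → ℝ)
    (β d : Fin p → ℝ) (H : Matrix (Fin p) (Fin p) ℝ) (κ : ℝ)
    (hS : DifferentiableAt ℝ S β) (hR : ConvexOn ℝ Set.univ R)
    (hH : H.PosSemidef) (hκ0 : 0 ≤ κ) (hκ1 : κ < 1)
    (hΔ : fderiv ℝ S β d + κ * (d ⬝ᵥ H.mulVec d) + R (β + d) - R β < 0) :
    ∀ ζ : ℝ, 0 < ζ → ζ < 1 →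
      ∃ ᾱ > (0 : ℝ), ∀ α : ℝ, 0 < α → α ≤ ᾱ →
        S (β + α • d) + R (β + α • d) ≤
          S β + R β +
            α * ζ * (fderiv ℝ S β d + κ * (d ⬝ᵥ H.mulVec d) + R (β + d) - R β) := by
  intro ζ hζ0 hζ1
  set g := fderiv ℝ S β d with hg
  set c := κ * (d ⬝ᵥ H.mulVec d) with hc
  set r := R (β + d) - R β with hr
  have hc0 : 0 ≤ c := mul_nonneg hκ0 (by simpa using hH.dotProduct_mulVec_nonneg d)
  set ε := (1 - ζ) * (-(g + c + r)) with hε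
  have hε0 : 0 < ε := mul_pos (by linarith) (by linarith)
  -- derivative of t ↦ S (β + t • d) at 0 is g
  have hline : HasDerivAt (fun t : ℝ => β + t • d) d 0 := by
    simpa using ((hasDerivAt_id (0:ℝ)).smul_const d).const_add β
  have hf : HasDerivAt (fun t : ℝ => S (β + t • d)) g 0 := by
    have hS' : HasFDerivAt S (fderiv ℝ S β) (β + (0:ℝ) • d) := by
      simpa using hS.hasFDerivAt
    exact hS'.comp_hasDerivAt 0 hline
  have hslope : Filter.Tendsto (slope (fun t : ℝ => S (β + t • d)) 0)
      (nhdsWithin 0 (Set.Ioi 0)) (nhds g) :=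
    (hasDerivAt_iff_tendsto_slope.mp hf).mono_left
      (nhdsWithin_mono _ (fun x hx => ne_of_gt hx))
  have hev : ∀ᶠ α in nhdsWithin 0 (Set.Ioi 0),
      slope (fun t : ℝ => S (β + t • d)) 0 α < g + ε :=
    hslope.eventually_lt_const (by linarith)
  obtain ⟨u, hu, hIoc⟩ := mem_nhdsGT_iff_exists_Ioc_subset.mp hev
  refine ⟨min u 1, lt_min hu one_pos, ?_⟩
  intro α hα0 hαu
  have hα1 : α ≤ 1 := hαu.trans (min_le_right _ _)
  have hαu' : α ≤ u := hαu.trans (min_le_left _ _)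
  have hsl : slope (fun t : ℝ => S (β + t • d)) 0 α < g + ε :=
    hIoc ⟨hα0, hαu'⟩
  rw [slope_def_field] at hsl
  have hS' : S (β + α • d) ≤ S β + α * (g + ε) := by
    have := (div_lt_iff₀ hα0).mp (by simpa [div_eq_iff hα0.ne'] using hsl)
    simp only [zero_smul, add_zero, sub_zero] at hsl
    have h2 : (S (β + α • d) - S β) / α < g + ε := by
      simpa using hsl
    nlinarith [(div_lt_iff₀ hα0).mp h2]
  have hconv : R (β + α • d) ≤ (1 - α) * R β + α * R (β + d) := by
    have := hR.2 (Set.mem_univ β) (Set.mem_univ (β + d))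
      (by linarith : (0:ℝ) ≤ 1 - α) (le_of_lt hα0) (by ring)
    have heq : (1 - α) • β + α • (β + d) = β + α • d := by module
    rw [heq] at this
    simpa [smul_eq_mul] using this
  have hkey : g + r + ε ≤ ζ * (g + c + r) := by
    rw [hε]; nlinarith
  have hmul : α * (g + r + ε) ≤ α * (ζ * (g + c + r)) :=
    mul_le_mul_of_nonneg_left hkey hα0.le
  rw [hε, hr] at hmul hS'
  nlinarith [hS', hconv, hmul]
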